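/- Let γ ∈ (1/2,1) and c₀ = 1/(2π). Suppose v : (ℝ² \ {0}) × [0,∞) → [0,∞] is measurable, v₀(ξ) = v(ξ,0), and v satisfies for all ξ ≠ 0 and t ≥ 0: v(ξ,t) = v₀(ξ) e^{−|ξ|^{2γ}t} + (c₀/2) ∫_0^t ∫_{ℝ²} |ξ| e^{−|ξ|^{2γ}s} v(η,t−s) v(ξ−η,t−s) |sin(θ(ξ,η) − θ(ξ,ξ−η))| dη ds. Suppose there exists a measurable set A ⊆ ℝ² with positive Lebesgue measure such that v₀(ξ) > 0 for almost every ξ ∈ A ∪ (−A). Then v(ξ,t) > 0 for every ξ ∈ ℝ² \ {0} and every t > 0. -/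

import Mathlib

open MeasureTheory Set ENNReal InnerProductGeometry

/-- The mild scalar integral equation satisfied by the expected magnitude of the 2D
fractional Navier–Stokes solution process (with `c₀ = 1/(2π)`), in `[0,∞]`-valued form. -/
def Solves2D (γ : ℝ) (v : EuclideanSpace ℝ (Fin 2) → ℝ → ℝ≥0∞) : Prop :=
  ∀ ξ : EuclideanSpace ℝ (Fin 2), ξ ≠ 0 → ∀ t : ℝ, 0 ≤ t →
    v ξ t = ENNReal.ofReal (Real.exp (-(‖ξ‖ ^ (2*γ)) * t)) * v ξ 0 +
      ∫⁻ s in Set.Ioc (0:ℝ) t, ∫⁻ η : EuclideanSpace ℝ (Fin 2),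
        ENNReal.ofReal ((1/(2*Real.pi))/2 * ‖ξ‖ * Real.exp (-(‖ξ‖ ^ (2*γ)) * s)
            * |Real.sin (InnerProductGeometry.angle ξ η
                - InnerProductGeometry.angle ξ (ξ - η))|)
          * (v η (t - s) * v (ξ - η) (t - s))


local notation "E2" => EuclideanSpace ℝ (Fin 2)

lemma inner_two (x y : E2) : (inner ℝ x y : ℝ) = x 0 * y 0 + x 1 * y 1 := by
  simp [PiLp.inner_apply, Fin.sum_univ_two]; ring

lemma sub_apply_two (x y : E2) (i : Fin 2) : (x - y) i = x i - y i := rfl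

lemma norm_sq_two (x : E2) : ‖x‖ * ‖x‖ = x 0 * x 0 + x 1 * x 1 := by
  rw [← real_inner_self_eq_norm_mul_norm, inner_two]

lemma sin_key (ξ η : E2) (hξ : ξ ≠ 0) (hη : η ≠ 0) (hξη : ξ - η ≠ 0) :
    Real.sin (angle ξ η - angle ξ (ξ - η)) * ((‖ξ‖ * ‖η‖) * (‖ξ‖ * ‖ξ - η‖))
      = |ξ 0 * η 1 - ξ 1 * η 0| * (‖ξ‖ * ‖ξ‖ - 2 * inner ℝ ξ η) := by
  have hnξ : ‖ξ‖ ≠ 0 := norm_ne_zero_iff.2 hξ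
  have hnη : ‖η‖ ≠ 0 := norm_ne_zero_iff.2 hη
  have hnξη : ‖ξ - η‖ ≠ 0 := norm_ne_zero_iff.2 hξη
  have h1 : Real.sin (angle ξ η) * (‖ξ‖ * ‖η‖) = |ξ 0 * η 1 - ξ 1 * η 0| := by
    rw [sin_angle_mul_norm_mul_norm]
    have : (inner ℝ ξ ξ : ℝ) * inner ℝ η η - inner ℝ ξ η * inner ℝ ξ η
        = (ξ 0 * η 1 - ξ 1 * η 0) ^ 2 := by
      simp only [inner_two]; ring
    rw [this, Real.sqrt_sq_eq_abs]
  have h2 : Real.sin (angle ξ (ξ - η)) * (‖ξ‖ * ‖ξ - η‖) = |ξ 0 * η 1 - ξ 1 * η 0| := by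
    rw [sin_angle_mul_norm_mul_norm]
    have : (inner ℝ ξ ξ : ℝ) * inner ℝ (ξ - η) (ξ - η) - inner ℝ ξ (ξ - η) * inner ℝ ξ (ξ - η)
        = (ξ 0 * η 1 - ξ 1 * η 0) ^ 2 := by
      simp only [inner_two, sub_apply_two]; ring
    rw [this, Real.sqrt_sq_eq_abs]
  have h3 : Real.cos (angle ξ η) * (‖ξ‖ * ‖η‖) = inner ℝ ξ η := by
    rw [cos_angle, div_mul_cancel₀]
    exact mul_ne_zero hnξ hnη
  have h4 : Real.cos (angle ξ (ξ - η)) * (‖ξ‖ * ‖ξ - η‖) = inner ℝ ξ (ξ - η) := by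
    rw [cos_angle, div_mul_cancel₀]
    exact mul_ne_zero hnξ hnξη
  have h5 : (inner ℝ ξ (ξ - η) : ℝ) = ‖ξ‖ * ‖ξ‖ - inner ℝ ξ η := by
    rw [inner_sub_right, real_inner_self_eq_norm_mul_norm]
  rw [Real.sin_sub]
  calc (Real.sin (angle ξ η) * Real.cos (angle ξ (ξ - η))
        - Real.cos (angle ξ η) * Real.sin (angle ξ (ξ - η))) * ((‖ξ‖ * ‖η‖) * (‖ξ‖ * ‖ξ - η‖))
      = (Real.sin (angle ξ η) * (‖ξ‖ * ‖η‖)) * (Real.cos (angle ξ (ξ - η)) * (‖ξ‖ * ‖ξ - η‖))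
        - (Real.cos (angle ξ η) * (‖ξ‖ * ‖η‖)) * (Real.sin (angle ξ (ξ - η)) * (‖ξ‖ * ‖ξ - η‖)) := by
        ring
    _ = |ξ 0 * η 1 - ξ 1 * η 0| * (‖ξ‖ * ‖ξ‖ - 2 * inner ℝ ξ η) := by
        rw [h1, h2, h3, h4, h5]; ring

lemma hyperplane_null (f : E2 →ₗ[ℝ] ℝ) (w : E2) (hw : f w ≠ 0) (c : ℝ) :
    volume {η : E2 | f η = c} = 0 := by
  set x₀ : E2 := (c / f w) • w with hx₀
  have hfx₀ : f x₀ = c := by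
    rw [hx₀, _root_.map_smul, smul_eq_mul, div_mul_cancel₀ _ hw]
  have hset : {η : E2 | f η = c} = (fun η => η - x₀) ⁻¹' (LinearMap.ker f : Set E2) := by
    ext η
    simp only [Set.mem_setOf_eq, Set.mem_preimage, SetLike.mem_coe, LinearMap.mem_ker,
      map_sub, hfx₀, sub_eq_zero]
  rw [hset]
  have hker : LinearMap.ker f ≠ ⊤ := by
    intro h
    exact hw (by simpa using (h ▸ Submodule.mem_top : w ∈ LinearMap.ker f))
  have h0 : volume (LinearMap.ker f : Set E2) = 0 :=
    Measure.addHaar_submodule volume _ hker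
  calc volume ((fun η => η - x₀) ⁻¹' (LinearMap.ker f : Set E2))
      = volume (LinearMap.ker f : Set E2) := by
        simp only [sub_eq_add_neg]
        exact measure_preimage_add_right volume (-x₀) _
    _ = 0 := h0

def detf (ξ : E2) : E2 →ₗ[ℝ] ℝ where
  toFun η := ξ 0 * η 1 - ξ 1 * η 0
  map_add' a b := by simp only [PiLp.add_apply]; ring
  map_smul' c a := by simp only [PiLp.smul_apply, smul_eq_mul, RingHom.id_apply]; ring

def badSet (ξ : E2) : Set E2 :=
  {η | ξ 0 * η 1 - ξ 1 * η 0 = 0} ∪ {η | (inner ℝ ξ η : ℝ) = ‖ξ‖ * ‖ξ‖ / 2}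

lemma normsq_pos (ξ : E2) (hξ : ξ ≠ 0) : 0 < ξ 0 * ξ 0 + ξ 1 * ξ 1 := by
  rw [← norm_sq_two]
  exact mul_pos (norm_pos_iff.2 hξ) (norm_pos_iff.2 hξ)

lemma badSet_null (ξ : E2) (hξ : ξ ≠ 0) : volume (badSet ξ) = 0 := by
  have h1 : volume {η : E2 | ξ 0 * η 1 - ξ 1 * η 0 = 0} = 0 := by
    have := hyperplane_null (detf ξ) (WithLp.toLp 2 (fun i : Fin 2 => if i = 0 then -ξ 1 else ξ 0) : E2) ?_ 0
    · exact this
    · show ξ 0 * ξ 0 - ξ 1 * (-ξ 1) ≠ 0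
      have := normsq_pos ξ hξ; nlinarith
  have h2 : volume {η : E2 | (inner ℝ ξ η : ℝ) = ‖ξ‖ * ‖ξ‖ / 2} = 0 := by
    have := hyperplane_null (innerSL ℝ ξ : E2 →L[ℝ] ℝ).toLinearMap ξ ?_ (‖ξ‖ * ‖ξ‖ / 2)
    · simpa using this
    · simp only [ContinuousLinearMap.coe_coe, innerSL_apply_apply]
      rw [inner_two]
      exact ne_of_gt (normsq_pos ξ hξ)
  exact measure_union_null h1 h2

lemma not_badSet (ξ η : E2) (hξ : ξ ≠ 0) (hη : η ∉ badSet ξ) :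
    η ≠ 0 ∧ ξ - η ≠ 0 ∧ 0 < |Real.sin (angle ξ η - angle ξ (ξ - η))| := by
  simp only [badSet, Set.mem_union, Set.mem_setOf_eq, not_or] at hη
  obtain ⟨hd, hi⟩ := hη
  have hη0 : η ≠ 0 := by
    rintro rfl; exact hd (by simp [show (0:E2) 0 = 0 from rfl, show (0:E2) 1 = 0 from rfl])
  have hξη : ξ - η ≠ 0 := by
    intro h
    have : η = ξ := by rwa [sub_eq_zero, eq_comm] at h
    subst this; exact hd (by ring)
  refine ⟨hη0, hξη, ?_⟩
  rw [abs_pos]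
  intro hs
  have := sin_key ξ η hξ hη0 hξη
  rw [hs, zero_mul] at this
  have h1 : |ξ 0 * η 1 - ξ 1 * η 0| ≠ 0 := abs_ne_zero.2 hd
  have h2 : ‖ξ‖ * ‖ξ‖ - 2 * (inner ℝ ξ η : ℝ) ≠ 0 := by
    intro h; apply hi; linarith
  exact (mul_ne_zero h1 h2) this.symm

lemma mang (ξ : E2) : Measurable fun η : E2 => angle ξ η := by
  unfold InnerProductGeometry.angle
  exact Real.continuous_arccos.measurable.comp
    ((continuous_const.inner continuous_id).measurable.div
      ((continuous_const.mul continuous_norm).measurable))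


lemma Fmeas (γ : ℝ) (v : E2 → ℝ → ℝ≥0∞) (hmeas : Measurable (Function.uncurry v))
    (ξ : E2) (t : ℝ) :
    Measurable (Function.uncurry fun (s : ℝ) (η : E2) =>
      ENNReal.ofReal ((1/(2*Real.pi))/2 * ‖ξ‖ * Real.exp (-(‖ξ‖ ^ (2*γ)) * s)
          * |Real.sin (angle ξ η - angle ξ (ξ - η))|)
        * (v η (t - s) * v (ξ - η) (t - s))) := by
  have h1 : Measurable fun p : ℝ × E2 => Real.exp (-(‖ξ‖ ^ (2*γ)) * p.1) :=
    (Real.continuous_exp.comp (continuous_const.mul continuous_fst)).measurable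
  have hang2 : Measurable fun η : E2 => angle ξ (ξ - η) :=
    (mang ξ).comp (continuous_const.sub continuous_id).measurable
  have h2 : Measurable fun p : ℝ × E2 =>
      |Real.sin (angle ξ p.2 - angle ξ (ξ - p.2))| :=
    (Real.continuous_sin.measurable.comp
      (((mang ξ).comp measurable_snd).sub (hang2.comp measurable_snd))).abs
  have hv1 : Measurable fun p : ℝ × E2 => v p.2 (t - p.1) :=
    hmeas.comp (measurable_snd.prodMk (measurable_const.sub measurable_fst))
  have hv2 : Measurable fun p : ℝ × E2 => v (ξ - p.2) (t - p.1) :=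
    hmeas.comp ((measurable_const.sub measurable_snd).prodMk
      (measurable_const.sub measurable_fst))
  exact (ENNReal.measurable_ofReal.comp
    ((measurable_const.mul h1).mul h2)).mul (hv1.mul hv2)

set_option maxHeartbeats 1000000 in
set_option maxHeartbeats 1000000 in
lemma core (γ : ℝ) (v : E2 → ℝ → ℝ≥0∞) (hmeas : Measurable (Function.uncurry v))
    (heq : Solves2D γ v) (ξ : E2) (hξ : ξ ≠ 0) (t : ℝ) (ht : 0 < t)
    (S : Set E2) (hS : 0 < volume S)
    (hSpos : ∀ η ∈ S, η ∉ badSet ξ → ∀ τ : ℝ, t/2 ≤ τ → τ < t →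
      0 < v η τ ∧ 0 < v (ξ - η) τ) :
    0 < v ξ t := by
  set F : ℝ → E2 → ℝ≥0∞ := fun s η =>
    ENNReal.ofReal ((1/(2*Real.pi))/2 * ‖ξ‖ * Real.exp (-(‖ξ‖ ^ (2*γ)) * s)
        * |Real.sin (angle ξ η - angle ξ (ξ - η))|)
      * (v η (t - s) * v (ξ - η) (t - s)) with hF
  have hFm : Measurable (Function.uncurry F) := Fmeas γ v hmeas ξ t
  have hg : Measurable fun s => ∫⁻ η, F s η := hFm.lintegral_prod_right
  rw [pos_iff_ne_zero]
  intro hv0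
  have hEq := heq ξ hξ t ht.le
  rw [hv0] at hEq
  have hI : (∫⁻ s in Ioc (0:ℝ) t, ∫⁻ η, F s η) = 0 := by
    have := (add_eq_zero.mp hEq.symm).2
    exact this
  have hI2 : (∫⁻ s in Ioc (0:ℝ) (t/2), ∫⁻ η, F s η) = 0 := by
    refine le_antisymm ?_ zero_le
    rw [← hI]
    exact lintegral_mono_set (Ioc_subset_Ioc le_rfl (by linarith))
  have hae : ∀ᵐ s ∂(volume.restrict (Ioc (0:ℝ) (t/2))), (∫⁻ η, F s η) = 0 :=
    (lintegral_eq_zero_iff hg).mp hI2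
  haveI hneb : (ae (volume.restrict (Ioc (0:ℝ) (t/2)))).NeBot := by
    refine ae_neBot.2 ?_
    intro h
    have : volume (Ioc (0:ℝ) (t/2)) = 0 := by
      rw [← Measure.restrict_apply_univ, h]; simp
    rw [Real.volume_Ioc] at this
    simp only [ENNReal.ofReal_eq_zero] at this
    linarith
  obtain ⟨s, hs0, hsIoc⟩ := (hae.and (ae_restrict_mem measurableSet_Ioc)).exists
  -- inner integral zero at s
  have hFsm : Measurable (F s) := hFm.of_uncurry_left
  have haeη : ∀ᵐ η : E2, F s η = 0 := (lintegral_eq_zero_iff hFsm).mp hs0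
  have hZ : volume {η : E2 | ¬ F s η = 0} = 0 := haeη
  have hSpos' : 0 < volume (S \ (badSet ξ ∪ {η | ¬ F s η = 0})) := by
    rw [measure_diff_null (measure_union_null (badSet_null ξ hξ) hZ)]
    exact hS
  obtain ⟨η, hηS, hηbad⟩ := nonempty_of_measure_ne_zero hSpos'.ne'
  simp only [Set.mem_union, Set.mem_setOf_eq, not_or, not_not] at hηbad
  obtain ⟨hηb, hηF⟩ := hηbad
  obtain ⟨hη0, hξη0, hsin⟩ := not_badSet ξ η hξ hηb
  obtain ⟨hv1, hv2⟩ := hSpos η hηS hηb (t - s) (by linarith [hsIoc.2]) (by linarith [hsIoc.1])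
  -- but F s η > 0
  have hpos : F s η ≠ 0 := by
    rw [hF]
    refine mul_ne_zero ?_ (mul_ne_zero hv1.ne' hv2.ne')
    rw [Ne, ENNReal.ofReal_eq_zero, not_le]
    have hπ : 0 < (1/(2*Real.pi))/2 := by positivity
    exact mul_pos (mul_pos (mul_pos hπ (norm_pos_iff.2 hξ)) (Real.exp_pos _)) hsin
  exact hpos hηF

lemma persist (γ : ℝ) (v : E2 → ℝ → ℝ≥0∞) (heq : Solves2D γ v) (ξ : E2) (hξ : ξ ≠ 0)
    (hv : 0 < v ξ 0) : ∀ τ : ℝ, 0 ≤ τ → 0 < v ξ τ := by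
  intro τ hτ
  rw [heq ξ hξ τ hτ]
  refine lt_of_lt_of_le (ENNReal.mul_pos ?_ hv.ne') le_self_add
  exact (ENNReal.ofReal_pos.2 (Real.exp_pos _)).ne'

lemma density_step (A : Set E2) (hA : MeasurableSet A) (hApos : 0 < volume A) :
    ∃ r : ℝ, 0 < r ∧ ∀ ξ : E2, ‖ξ‖ ≤ r / 2 →
      0 < volume (A ∩ ((fun η => η - ξ) ⁻¹' A)) := by
  obtain ⟨a, ha⟩ : ∃ a : E2, Filter.Tendsto
      (fun r => volume (A ∩ Metric.closedBall a r) / volume (Metric.closedBall a r))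
      (nhdsWithin 0 (Set.Ioi 0)) (nhds 1) := by
    have h := Besicovitch.ae_tendsto_measure_inter_div volume A
    haveI : (ae (volume.restrict A)).NeBot := by
      refine ae_neBot.2 ?_
      intro h0
      have : volume A = 0 := by rw [← Measure.restrict_apply_univ, h0]; simp
      exact hApos.ne' this
    exact h.exists
  have hev := ha.eventually (eventually_gt_nhds
    (show ENNReal.ofReal (7/8) < 1 from ENNReal.ofReal_lt_one.2 (by norm_num)))
  obtain ⟨r, hr, hsub⟩ := mem_nhdsGT_iff_exists_Ioc_subset.mp hev
  rw [Set.mem_Ioi] at hr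
  refine ⟨r, hr, fun ξ hξ => ?_⟩
  -- ratios at r and r/2
  have hrat : ∀ ρ : ℝ, ρ ∈ Set.Ioc (0:ℝ) r →
      ENNReal.ofReal (7/8) * volume (Metric.closedBall a ρ) <
        volume (A ∩ Metric.closedBall a ρ) := by
    intro ρ hρ
    have h := hsub hρ
    simp only [Set.mem_setOf_eq] at h
    have hb0 : volume (Metric.closedBall a ρ) ≠ 0 :=
      (lt_of_lt_of_le (Metric.measure_ball_pos volume a hρ.1)
        (measure_mono Metric.ball_subset_closedBall)).ne'
    exact (ENNReal.lt_div_iff_mul_lt (Or.inl hb0)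
      (Or.inl measure_closedBall_lt_top.ne)).mp h
  set m := volume (Metric.closedBall a (r/2)) with hm
  have hm0 : m ≠ 0 := (lt_of_lt_of_le (Metric.measure_ball_pos volume a (by linarith))
      (measure_mono Metric.ball_subset_closedBall)).ne'
  have hmtop : m ≠ ⊤ := measure_closedBall_lt_top.ne
  have h4 : volume (Metric.closedBall a r) = 4 * m := by
    rw [hm, Measure.addHaar_closedBall volume a hr.le,
      Measure.addHaar_closedBall volume a (by linarith : (0:ℝ) ≤ r/2),
      finrank_euclideanSpace_fin]
    rw [show r ^ 2 = 4 * ((r/2) ^ 2) by ring, ENNReal.ofReal_mul (by norm_num)]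
    rw [show ENNReal.ofReal (4:ℝ) = 4 by norm_num [ENNReal.ofReal_ofNat]]
    ring
  set X := A ∩ Metric.closedBall a r with hX
  set Y := ((fun η => η - ξ) ⁻¹' A) ∩ Metric.closedBall a r with hY
  have hXlb : ENNReal.ofReal (7/8) * (4 * m) < volume X := by
    rw [← h4]; exact hrat r ⟨hr, le_rfl⟩
  have hYlb : ENNReal.ofReal (7/8) * m < volume Y := by
    calc ENNReal.ofReal (7/8) * m < volume (A ∩ Metric.closedBall a (r/2)) :=
          hrat (r/2) ⟨by linarith, by linarith⟩
      _ = volume ((fun η => η - ξ) ⁻¹' (A ∩ Metric.closedBall a (r/2))) := by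
          simp only [sub_eq_add_neg]
          exact (measure_preimage_add_right volume (-ξ) _).symm
      _ ≤ volume Y := by
          refine measure_mono ?_
          rintro z ⟨hzA, hzb⟩
          refine ⟨hzA, ?_⟩
          rw [Metric.mem_closedBall] at hzb ⊢
          have h1 : dist z a ≤ dist z (z - ξ) + dist (z - ξ) a := dist_triangle _ _ _
          have h2 : dist z (z - ξ) = ‖ξ‖ := by
            rw [dist_eq_norm]; congr 1; abel
          linarith
  have hkey : (4:ℝ≥0∞) * m < ENNReal.ofReal (7/8) * m + ENNReal.ofReal (7/8) * (4 * m) := by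
    have he : ENNReal.ofReal (7/8) * m + ENNReal.ofReal (7/8) * (4 * m)
        = (ENNReal.ofReal (7/8) + ENNReal.ofReal (7/8) * 4) * m := by ring
    rw [he]
    refine ENNReal.mul_lt_mul_left hm0 hmtop ?_
    have h4' : (4:ℝ≥0∞) = ENNReal.ofReal 4 := by norm_num
    rw [h4', ← ENNReal.ofReal_mul (by norm_num), ← ENNReal.ofReal_add (by norm_num) (by norm_num)]
    exact ENNReal.ofReal_lt_ofReal_iff (by norm_num) |>.2 (by norm_num)
  rw [pos_iff_ne_zero]
  intro h0
  have h0' : volume (Y ∩ X) = 0 := by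
    refine le_antisymm (le_trans (measure_mono ?_) h0.le) zero_le
    rintro z ⟨⟨hz1, _⟩, ⟨hz2, _⟩⟩
    exact ⟨hz2, hz1⟩
  have hXm : MeasurableSet X := hA.inter measurableSet_closedBall
  have hsum : volume (Y ∪ X) + volume (Y ∩ X) = volume Y + volume X :=
    measure_union_add_inter Y hXm
  rw [h0', add_zero] at hsum
  have hUB : volume (Y ∪ X) ≤ 4 * m := by
    rw [← h4]
    refine measure_mono ?_
    rintro z (⟨_, hz⟩ | ⟨_, hz⟩) <;> exact hz
  have : (4:ℝ≥0∞) * m < 4 * m := by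
    calc (4:ℝ≥0∞) * m < ENNReal.ofReal (7/8) * m + ENNReal.ofReal (7/8) * (4 * m) := hkey
      _ < volume Y + volume X := ENNReal.add_lt_add hYlb hXlb
      _ = volume (Y ∪ X) := hsum.symm
      _ ≤ 4 * m := hUB
  exact absurd this (lt_irrefl _)

theorem stmt14 (γ : ℝ) (hγ : γ ∈ Set.Ioo (1/2 : ℝ) 1)
    (v : EuclideanSpace ℝ (Fin 2) → ℝ → ℝ≥0∞)
    (hmeas : Measurable (Function.uncurry v))
    (heq : Solves2D γ v)
    (A : Set (EuclideanSpace ℝ (Fin 2))) (hA : MeasurableSet A) (hApos : 0 < volume A)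
    (hv₀ : ∀ᵐ ξ : EuclideanSpace ℝ (Fin 2), ξ ∈ A ∪ (-A) → 0 < v ξ 0) :
    ∀ ξ : EuclideanSpace ℝ (Fin 2), ξ ≠ 0 → ∀ t : ℝ, 0 < t → 0 < v ξ t := by
  obtain ⟨r, hr, hden⟩ := density_step A hA hApos
  set N₁ : Set (EuclideanSpace ℝ (Fin 2)) :=
    {η | ¬ (η ∈ A ∪ (-A) → 0 < v η 0)} ∪ {0} with hN₁def
  have hN₁ : volume N₁ = 0 :=
    measure_union_null (ae_iff.mp hv₀) (measure_singleton 0)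
  have claim1 : ∀ ξ : EuclideanSpace ℝ (Fin 2), ξ ≠ 0 → ‖ξ‖ ≤ r/2 →
      ∀ t : ℝ, 0 < t → 0 < v ξ t := by
    intro ξ hξ hnorm t ht
    refine core γ v hmeas heq ξ hξ t ht
      ((A ∩ ((fun η => η - ξ) ⁻¹' A)) \ (N₁ ∪ ((fun η => ξ - η) ⁻¹' N₁))) ?_ ?_
    · have hpre : volume ((fun η : EuclideanSpace ℝ (Fin 2) => ξ - η) ⁻¹' N₁) = 0 := by
        have hset : (fun η : EuclideanSpace ℝ (Fin 2) => ξ - η) ⁻¹' N₁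
            = Neg.neg ⁻¹' ((fun y => y + ξ) ⁻¹' N₁) := by
          ext z
          simp only [Set.mem_preimage]
          rw [sub_eq_neg_add]
        rw [hset]
        have h1 : volume ((fun y : EuclideanSpace ℝ (Fin 2) => y + ξ) ⁻¹' N₁) = 0 := by
          rw [measure_preimage_add_right volume ξ N₁]; exact hN₁
        calc volume (Neg.neg ⁻¹' ((fun y : EuclideanSpace ℝ (Fin 2) => y + ξ) ⁻¹' N₁))
            = volume (-((fun y : EuclideanSpace ℝ (Fin 2) => y + ξ) ⁻¹' N₁)) := rfl
          _ = 0 := by rw [Measure.measure_neg]; exact h1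
      rw [measure_diff_null (measure_union_null hN₁ hpre)]
      exact hden ξ hnorm
    · rintro η ⟨⟨hηA, hηpre⟩, hηN⟩ hbad τ hτ1 hτ2
      simp only [Set.mem_union, not_or] at hηN
      obtain ⟨hη1, hη2⟩ := hηN
      have hτ0 : (0:ℝ) ≤ τ := by linarith
      have hη1' : η ∉ {η | ¬ (η ∈ A ∪ (-A) → 0 < v η 0)} ∧ η ∉ ({0} : Set _) := by
        constructor <;> intro h <;> [exact hη1 (Or.inl h); exact hη1 (Or.inr h)]
      have hξη1' : (ξ - η) ∉ {η | ¬ (η ∈ A ∪ (-A) → 0 < v η 0)} ∧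
          (ξ - η) ∉ ({0} : Set _) := by
        constructor <;> intro h <;> [exact hη2 (Or.inl h); exact hη2 (Or.inr h)]
      have hη0 : η ≠ 0 := hη1'.2
      have hξη0 : ξ - η ≠ 0 := hξη1'.2
      have hvη : 0 < v η 0 := by
        have := hη1'.1
        simp only [Set.mem_setOf_eq, not_not] at this
        exact this (Or.inl hηA)
      have hvξη : 0 < v (ξ - η) 0 := by
        have h := hξη1'.1
        simp only [Set.mem_setOf_eq, not_not] at h
        refine h (Or.inr ?_)
        rw [Set.mem_neg]
        have : -(ξ - η) = η - ξ := by abel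
        rw [this]
        exact hηpre
      exact ⟨persist γ v heq η hη0 hvη τ hτ0, persist γ v heq (ξ - η) hξη0 hvξη τ hτ0⟩
  have main : ∀ n : ℕ, ∀ ξ : EuclideanSpace ℝ (Fin 2), ξ ≠ 0 →
      ‖ξ‖ ≤ (3/2:ℝ)^n * (r/2) → ∀ t : ℝ, 0 < t → 0 < v ξ t := by
    intro n
    induction n with
    | zero => intro ξ hξ hnorm; exact claim1 ξ hξ (by simpa using hnorm)
    | succ n ih =>
      intro ξ hξ hnorm t ht
      set R : ℝ := (3/2:ℝ)^n * (r/2) with hR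
      have hRpos : 0 < R := by positivity
      have hnξ : ‖ξ‖ ≤ (3/2) * R := by
        rw [hR]
        calc ‖ξ‖ ≤ (3/2:ℝ)^(n+1) * (r/2) := hnorm
          _ = 3/2 * ((3/2:ℝ)^n * (r/2)) := by ring
      refine core γ v hmeas heq ξ hξ t ht
        (Metric.closedBall ((1/2:ℝ) • ξ) (R/4)) ?_ ?_
      · exact lt_of_lt_of_le (Metric.measure_ball_pos volume _ (by linarith))
          (measure_mono Metric.ball_subset_closedBall)
      · intro η hη hbad τ hτ1 hτ2
        obtain ⟨hη0, hξη0, _⟩ := not_badSet ξ η hξ hbad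
        have hd : ‖η - (1/2:ℝ) • ξ‖ ≤ R/4 := by
          rw [← dist_eq_norm]; exact Metric.mem_closedBall.mp hη
        have hhalf : ‖(1/2:ℝ) • ξ‖ ≤ (3/4) * R := by
          rw [norm_smul, Real.norm_eq_abs]
          rw [show |(1/2:ℝ)| = 1/2 by norm_num]
          linarith
        have h1 : ‖η‖ ≤ R := by
          calc ‖η‖ = ‖(η - (1/2:ℝ) • ξ) + (1/2:ℝ) • ξ‖ := by congr 1; abel
            _ ≤ ‖η - (1/2:ℝ) • ξ‖ + ‖(1/2:ℝ) • ξ‖ := norm_add_le _ _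
            _ ≤ R/4 + (3/4) * R := by linarith
            _ = R := by ring
        have h2 : ‖ξ - η‖ ≤ R := by
          have hsplit : ξ - η = (1/2:ℝ) • ξ - (η - (1/2:ℝ) • ξ) := by
            module
          calc ‖ξ - η‖ = ‖(1/2:ℝ) • ξ - (η - (1/2:ℝ) • ξ)‖ := by rw [← hsplit]
            _ ≤ ‖(1/2:ℝ) • ξ‖ + ‖η - (1/2:ℝ) • ξ‖ := norm_sub_le _ _
            _ ≤ (3/4) * R + R/4 := by linarith
            _ = R := by ring
        have hτpos : 0 < τ := lt_of_lt_of_le (by linarith) hτ1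
        exact ⟨ih η hη0 h1 τ hτpos, ih (ξ - η) hξη0 h2 τ hτpos⟩
  intro ξ hξ t ht
  obtain ⟨n, hn⟩ := pow_unbounded_of_one_lt (‖ξ‖/(r/2)) (by norm_num : (1:ℝ) < 3/2)
  refine main n ξ hξ ?_ t ht
  have := (div_lt_iff₀ (by linarith : (0:ℝ) < r/2)).mp hn
  linarith
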